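/- Let f_0(u) = -ln(1 - ρu)/(ρu) for ρ ∈ (0,1], and write r ln f_0(u) = ∑_{k=1}^∞ a_k u^k for its power series around 0 (r > 0). Then for every k ≥ 1, r ρ^k/(k²(k+1)) ≤ a_k ≤ r ρ^k/(k+1); in particular all a_k are positive. -/

import Mathlib

open Real Filter Topology MeasureTheory

namespace Stmt14Aux

noncomputable def aa (s : ℝ) (m : ℕ) : ℝ := (∏ k ∈ Finset.range m, (s + k)) / m.factorial

lemma cast_factorial_eq (m : ℕ) : (m.factorial : ℝ) = ∏ k ∈ Finset.range m, ((k : ℝ) + 1) := by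
  rw [← Finset.prod_range_add_one_eq_factorial]; push_cast; rfl

lemma aa_zero (s : ℝ) : aa s 0 = 1 := by simp [aa]

lemma aa_succ_mul (s : ℝ) (m : ℕ) :
    ((m : ℝ) + 1) * aa s (m + 1) = (s + m) * aa s m := by
  have h1 : (((m + 1).factorial : ℝ)) = ((m : ℝ) + 1) * m.factorial := by
    rw [Nat.factorial_succ]; push_cast; ring
  have h2 : (m.factorial : ℝ) ≠ 0 := Nat.cast_ne_zero.2 m.factorial_ne_zero
  have h3 : ((m : ℝ) + 1) ≠ 0 := by positivity
  simp only [aa, Finset.prod_range_succ, h1]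
  field_simp

lemma aa_nonneg {s : ℝ} (hs : 0 ≤ s) (m : ℕ) : 0 ≤ aa s m := by
  apply div_nonneg _ (by positivity)
  exact Finset.prod_nonneg fun k _ => by positivity

lemma aa_le_one {s : ℝ} (hs0 : 0 ≤ s) (hs1 : s ≤ 1) (m : ℕ) : aa s m ≤ 1 := by
  rw [aa, div_le_one (by positivity)]
  calc ∏ k ∈ Finset.range m, (s + k) ≤ ∏ k ∈ Finset.range m, ((k : ℝ) + 1) := by
        apply Finset.prod_le_prod (fun k _ => by positivity) (fun k _ => by linarith)
    _ = m.factorial := (cast_factorial_eq m).symm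

lemma aa_ge {s : ℝ} (hs0 : 0 ≤ s) {m : ℕ} (hm : 1 ≤ m) : s / m ≤ aa s m := by
  obtain ⟨m, rfl⟩ := Nat.exists_eq_add_of_le hm
  rw [Nat.add_comm 1 m]
  rw [aa, le_div_iff₀ (by positivity)]
  have h1 : (((m + 1).factorial : ℝ)) = (m.factorial : ℝ) * ((m : ℝ) + 1) := by
    rw [Nat.factorial_succ]; push_cast; ring
  have key : (m.factorial : ℝ) ≤ ∏ k ∈ Finset.range m, (s + ((k + 1 : ℕ) : ℝ)) := by
    rw [cast_factorial_eq m]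
    apply Finset.prod_le_prod (fun k _ => by positivity) (fun k _ => by push_cast; linarith)
  have key2 : (m.factorial : ℝ) * s ≤ (∏ k ∈ Finset.range m, (s + ((k + 1 : ℕ) : ℝ))) * s :=
    mul_le_mul_of_nonneg_right key hs0
  have hprod : ∏ k ∈ Finset.range (m + 1), (s + (k : ℝ)) =
      (∏ k ∈ Finset.range m, (s + ((k + 1 : ℕ) : ℝ))) * s := by
    rw [Finset.prod_range_succ']
    push_cast
    simp
  rw [hprod, h1]
  have hm1 : ((m : ℝ) + 1) > 0 := by positivity
  push_cast
  have : s / ((m : ℝ) + 1) * ((m.factorial : ℝ) * ((m : ℝ) + 1)) = (m.factorial : ℝ) * s := by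
    field_simp
  rw [this]
  exact key2.trans_eq (by simp)

lemma summable_aa {s t : ℝ} (hs0 : 0 ≤ s) (hs1 : s ≤ 1) (ht0 : 0 ≤ t) (ht1 : t < 1) :
    Summable (fun m => aa s m * t ^ m) := by
  apply Summable.of_nonneg_of_le (fun m => by
      have := aa_nonneg hs0 m; positivity)
    (fun m => by
      have h1 := aa_le_one hs0 hs1 m
      have h2 : (0:ℝ) ≤ t ^ m := by positivity
      nlinarith)
    (summable_geometric_of_lt_one ht0 ht1)

lemma summable_deriv_bound {b : ℝ} (hb0 : 0 < b) (hb1 : b < 1) :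
    Summable (fun m : ℕ => (m : ℝ) * b ^ (m - 1)) := by
  rw [← summable_nat_add_iff 1]
  have h : Summable (fun m : ℕ => ((m : ℝ) + 1) * b ^ m) := by
    have h1 : Summable (fun m : ℕ => (m : ℝ) * b ^ m) := by
      simpa using summable_pow_mul_geometric_of_norm_lt_one 1
        (r := b) (by rw [Real.norm_eq_abs, abs_of_pos hb0]; exact hb1)
    have h2 : Summable (fun m : ℕ => b ^ m) :=
      summable_geometric_of_lt_one hb0.le hb1
    simpa [add_mul] using h1.add h2
  apply h.congr
  intro m
  push_cast
  ring_nf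

lemma summable_aa_deriv {s y b : ℝ} (hs0 : 0 ≤ s) (hs1 : s ≤ 1) (hb0 : 0 < b) (hb1 : b < 1)
    (hy : |y| ≤ b) : Summable (fun m : ℕ => aa s m * ((m : ℝ) * y ^ (m - 1))) := by
  apply Summable.of_norm_bounded (summable_deriv_bound hb0 hb1)
  intro m
  rw [Real.norm_eq_abs, abs_mul, abs_mul, abs_of_nonneg (aa_nonneg hs0 m),
    abs_of_nonneg (by positivity : (0:ℝ) ≤ (m:ℝ)), abs_pow]
  calc aa s m * ((m:ℝ) * |y| ^ (m-1)) ≤ 1 * ((m:ℝ) * b ^ (m-1)) := by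
        apply mul_le_mul (aa_le_one hs0 hs1 m)
        · exact mul_le_mul_of_nonneg_left (pow_le_pow_left₀ (abs_nonneg y) hy _) (by positivity)
        · positivity
        · norm_num
    _ = (m:ℝ) * b ^ (m-1) := by ring

lemma hasDerivAt_aa_tsum {s b y : ℝ} (hs0 : 0 ≤ s) (hs1 : s ≤ 1) (hb0 : 0 < b) (hb1 : b < 1)
    (hy : y ∈ Set.Ioo (-b) b) :
    HasDerivAt (fun z => ∑' m, aa s m * z ^ m)
      (∑' m, aa s m * ((m : ℝ) * y ^ (m - 1))) y := by
  apply hasDerivAt_tsum_of_isPreconnected (u := fun m : ℕ => (m : ℝ) * b ^ (m - 1))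
    (summable_deriv_bound hb0 hb1) isOpen_Ioo (convex_Ioo _ _).isPreconnected
    (fun m z hz => (hasDerivAt_pow m z).const_mul (aa s m))
    (fun m z hz => ?_) (y₀ := 0) (by constructor <;> [linarith; exact hb0]) ?_ hy
  case _ => 
    apply summable_of_ne_finset_zero (s := {0})
    intro m hm
    simp only [Finset.mem_singleton] at hm
    simp [zero_pow hm]
  · rw [Real.norm_eq_abs, abs_mul, abs_mul, abs_of_nonneg (aa_nonneg hs0 m),
      abs_of_nonneg (by positivity : (0:ℝ) ≤ (m:ℝ)), abs_pow]
    have hz' : |z| ≤ b := by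
      rw [abs_le]; exact ⟨hz.1.le, hz.2.le⟩
    calc aa s m * ((m:ℝ) * |z| ^ (m-1)) ≤ 1 * ((m:ℝ) * b ^ (m-1)) := by
          apply mul_le_mul (aa_le_one hs0 hs1 m)
          · exact mul_le_mul_of_nonneg_left (pow_le_pow_left₀ (abs_nonneg z) hz' _) (by positivity)
          · positivity
          · norm_num
      _ = (m:ℝ) * b ^ (m-1) := by ring

lemma tsum_aa_zero (s : ℝ) : ∑' m, aa s m * (0:ℝ) ^ m = 1 := by
  rw [tsum_eq_single 0 (fun m hm => by simp [zero_pow hm])]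
  simp [aa_zero]

lemma hasSum_aa {s t : ℝ} (hs0 : 0 ≤ s) (hs1 : s ≤ 1) (ht0 : 0 ≤ t) (ht1 : t < 1) :
    HasSum (fun m => aa s m * t ^ m) (Real.exp (-s * Real.log (1 - t))) := by
  have hsum := summable_aa hs0 hs1 ht0 ht1
  suffices hF : ∑' m, aa s m * t ^ m = Real.exp (-s * Real.log (1 - t)) by
    have := hsum.hasSum
    rwa [hF] at this
  set b : ℝ := (1 + t) / 2 with hb
  have hb0 : 0 < b := by rw [hb]; linarith
  have hb1 : b < 1 := by rw [hb]; linarith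
  have htb : t < b := by rw [hb]; linarith
  set F : ℝ → ℝ := fun z => ∑' m, aa s m * z ^ m with hFdef
  set Q : ℝ → ℝ := fun z => Real.exp (s * Real.log (1 - z)) * F z with hQdef
  have claim : ∀ y ∈ Set.Icc (0:ℝ) t, HasDerivAt Q 0 y := by
    intro y hy
    have hy0 : 0 ≤ y := hy.1
    have hyt : y ≤ t := hy.2
    have hy1 : y < 1 := lt_of_le_of_lt hyt ht1
    have hyb : y ∈ Set.Ioo (-b) b := ⟨by linarith, by linarith⟩
    have h1y : (1:ℝ) - y ≠ 0 := by linarith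
    have h1y' : (0:ℝ) < 1 - y := by linarith
    set D : ℝ := ∑' m, aa s m * ((m : ℝ) * y ^ (m - 1)) with hD
    have hF' : HasDerivAt F D y := hasDerivAt_aa_tsum hs0 hs1 hb0 hb1 hyb
    have hDsum : HasSum (fun m : ℕ => aa s m * ((m : ℝ) * y ^ (m - 1))) D :=
      (summable_aa_deriv hs0 hs1 hb0 hb1 (by rw [abs_le]; exact ⟨by linarith, by linarith⟩)).hasSum
    have hFy : HasSum (fun m => aa s m * y ^ m) (F y) :=
      (summable_aa hs0 hs1 hy0 hy1).hasSum
    -- shifted sum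
    have hshift : HasSum (fun m : ℕ => aa s (m + 1) * (((m:ℝ) + 1) * y ^ m)) D := by
      have := (hasSum_nat_add_iff (f := fun m : ℕ => aa s m * ((m : ℝ) * y ^ (m - 1))) 1).2
        (by simpa using hDsum)
      apply this.congr
      intro m
      norm_num
    have hkey : (1 - y) * D = s * F y := by
      have h2 : HasSum (fun m : ℕ => s * (aa s m * y ^ m) + y * (aa s m * ((m:ℝ) * y ^ (m-1)))) 
          (s * F y + y * D) := (hFy.mul_left s).add (hDsum.mul_left y)
      have h3 : (fun m : ℕ => aa s (m + 1) * (((m:ℝ) + 1) * y ^ m)) =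
          fun m : ℕ => s * (aa s m * y ^ m) + y * (aa s m * ((m:ℝ) * y ^ (m-1))) := by
        funext m
        have := aa_succ_mul s m
        have hmy : (m:ℝ) * y ^ m = y * ((m:ℝ) * y ^ (m - 1)) := by
          cases m with
          | zero => simp
          | succ k =>
            rw [Nat.add_sub_cancel]
            push_cast
            ring
        calc aa s (m+1) * (((m:ℝ)+1) * y ^ m) = (((m:ℝ)+1) * aa s (m+1)) * y ^ m := by ring
          _ = ((s + m) * aa s m) * y ^ m := by rw [this]
          _ = s * (aa s m * y ^ m) + (m:ℝ) * y ^ m * aa s m := by ring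
          _ = _ := by rw [hmy]; ring
      rw [h3] at hshift
      have := hshift.unique h2
      linarith [this]
    have he : HasDerivAt (fun z => Real.exp (s * Real.log (1 - z)))
        (Real.exp (s * Real.log (1 - y)) * (s * (-(1 - y)⁻¹))) y := by
      apply HasDerivAt.exp
      have hlog : HasDerivAt (fun z => Real.log (1 - z)) ((1 - y)⁻¹ * (-1)) y :=
        (Real.hasDerivAt_log h1y).comp y ((hasDerivAt_id y).const_sub 1)
      have := hlog.const_mul s
      exact this.congr_deriv (by ring)
    have hQ' := he.mul hF'
    have hval : Real.exp (s * Real.log (1 - y)) * (s * (-(1 - y)⁻¹)) * F y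
        + Real.exp (s * Real.log (1 - y)) * D = 0 := by
      have hE : Real.exp (s * Real.log (1 - y)) > 0 := Real.exp_pos _
      field_simp
      nlinarith [hkey]
    rw [hval] at hQ'
    exact hQ'
  have hconst : Q t = Q 0 := by
    rcases eq_or_lt_of_le ht0 with h | h
    · rw [← h]
    · exact constant_of_has_deriv_right_zero
        (fun y hy => ((claim y hy).continuousAt.continuousWithinAt))
        (fun y hy => (claim y (Set.mem_Icc.2 ⟨hy.1, hy.2.le⟩)).hasDerivWithinAt)
        t (Set.mem_Icc.2 ⟨ht0, le_rfl⟩)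
  have hQ0 : Q 0 = 1 := by
    rw [hQdef]
    simp only [sub_zero, Real.log_one, mul_zero, Real.exp_zero, one_mul]
    exact tsum_aa_zero s
  rw [hQ0] at hconst
  simp only [hQdef] at hconst
  have : F t = (Real.exp (s * Real.log (1 - t)))⁻¹ :=
    eq_inv_of_mul_eq_one_left (by rw [mul_comm]; exact hconst)
  rw [hFdef] at this
  simp only at this
  rw [this, ← Real.exp_neg]
  ring_nf

lemma aa_le_self {s : ℝ} (hs0 : 0 ≤ s) (hs1 : s ≤ 1) {m : ℕ} (hm : 1 ≤ m) : aa s m ≤ s := by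
  obtain ⟨j, rfl⟩ := Nat.exists_eq_add_of_le hm
  rw [Nat.add_comm 1 j]
  have hfac : ((j+1).factorial : ℝ) = ∏ k ∈ Finset.range j, ((k : ℝ) + 2) := by
    rw [cast_factorial_eq, Finset.prod_range_succ']
    push_cast
    ring_nf
  rw [aa, div_le_iff₀ (by positivity)]
  rw [Finset.prod_range_succ']
  push_cast
  simp only [add_zero]
  have h1 : ∏ k ∈ Finset.range j, (s + ((k:ℝ) + 1)) ≤ ∏ k ∈ Finset.range j, ((k : ℝ) + 2) :=
    Finset.prod_le_prod (fun k _ => by positivity) (fun k _ => by linarith)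
  calc (∏ k ∈ Finset.range j, (s + ((k:ℝ) + 1))) * s ≤ (∏ k ∈ Finset.range j, ((k : ℝ) + 2)) * s :=
        mul_le_mul_of_nonneg_right h1 hs0
    _ = s * (j+1).factorial := by rw [hfac]; ring
noncomputable def S (m : ℕ) : ℝ := ∫ s in Set.Ioc (0:ℝ) 1, aa s m

lemma continuous_aa (m : ℕ) : Continuous (fun s => aa s m) := by
  unfold aa
  exact (continuous_finset_prod _ (fun k _ => by continuity)).div_const _

lemma integrable_aa (m : ℕ) :
    MeasureTheory.IntegrableOn (fun s => aa s m) (Set.Ioc (0:ℝ) 1) :=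
  (continuous_aa m).integrableOn_Ioc

lemma S_eq_interval (m : ℕ) : S m = ∫ s in (0:ℝ)..1, aa s m := by
  rw [intervalIntegral.integral_of_le (by norm_num)]; rfl

lemma S_nonneg (m : ℕ) : 0 ≤ S m :=
  setIntegral_nonneg measurableSet_Ioc (fun s hs => aa_nonneg hs.1.le m)

lemma S_zero : S 0 = 1 := by
  unfold S
  simp only [aa_zero]
  rw [MeasureTheory.setIntegral_const]
  simp

lemma S_le_one (m : ℕ) : S m ≤ 1 := by
  calc S m ≤ ∫ s in Set.Ioc (0:ℝ) 1, (1:ℝ) := by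
        apply setIntegral_mono_on (integrable_aa m) (integrableOn_const (by simp))
          measurableSet_Ioc
        intro s hs
        exact aa_le_one hs.1.le hs.2 m
    _ = 1 := by rw [MeasureTheory.setIntegral_const]; simp

lemma integral_id_Ioc : ∫ s in Set.Ioc (0:ℝ) 1, s = 1/2 := by
  rw [← intervalIntegral.integral_of_le (by norm_num : (0:ℝ) ≤ 1)]
  rw [integral_id]
  norm_num

lemma S_le_half {m : ℕ} (hm : 1 ≤ m) : S m ≤ 1/2 := by
  calc S m ≤ ∫ s in Set.Ioc (0:ℝ) 1, s := by
        apply setIntegral_mono_on (integrable_aa m)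
          (continuous_id.integrableOn_Ioc) measurableSet_Ioc
        intro s hs
        have h1 : aa s m ≤ 1 := aa_le_one hs.1.le hs.2 m
        -- aa s m = (s * ∏_{k=1}^{m-1}(s+k)) / m! ≤ s * (m!/1)/m! = s
        exact aa_le_self hs.1.le hs.2 hm
    _ = 1/2 := integral_id_Ioc

lemma S_ge {m : ℕ} (hm : 1 ≤ m) : 1 / (2 * m) ≤ S m := by
  have : ∫ s in Set.Ioc (0:ℝ) 1, s / m = 1 / (2 * m) := by
    rw [MeasureTheory.integral_div, integral_id_Ioc]
    ring
  rw [← this]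
  apply setIntegral_mono_on (by exact (continuous_id.div_const _).integrableOn_Ioc)
    (integrable_aa m) measurableSet_Ioc
  intro s hs
  exact aa_ge hs.1.le hm

lemma volume_Ioc01 : (MeasureTheory.volume (Set.Ioc (0:ℝ) 1)).toReal = 1 := by
  rw [Real.volume_Ioc]
  norm_num

lemma hasSum_S {t : ℝ} (ht : t ∈ Set.Ioo (0:ℝ) 1) :
    HasSum (fun m => S m * t ^ m) ((-Real.log (1 - t))⁻¹ * ((1 - t)⁻¹ - 1)) := by
  obtain ⟨ht0, ht1⟩ := ht
  have h1t : (0:ℝ) < 1 - t := by linarith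
  set L := -Real.log (1 - t) with hL
  have hL0 : 0 < L := by
    rw [hL]
    exact neg_pos.2 (Real.log_neg h1t (by linarith))
  have hsummable : Summable (fun m => S m * t ^ m) := by
    apply Summable.of_nonneg_of_le (fun m => by have := S_nonneg m; positivity)
      (fun m => mul_le_of_le_one_left (by positivity) (S_le_one m))
      (summable_geometric_of_lt_one ht0.le ht1)
  suffices hval : ∑' m, S m * t ^ m = L⁻¹ * ((1 - t)⁻¹ - 1) by
    have := hsummable.hasSum
    rwa [hval] at this
  have hSm : ∀ m, S m * t ^ m = ∫ s in Set.Ioc (0:ℝ) 1, aa s m * t ^ m := by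
    intro m
    rw [S, ← MeasureTheory.integral_mul_const]
  have hint : ∀ m : ℕ, MeasureTheory.IntegrableOn (fun s => aa s m * t ^ m)
      (Set.Ioc (0:ℝ) 1) := fun m => ((continuous_aa m).mul continuous_const).integrableOn_Ioc
  have hnorm : Summable fun m : ℕ => ∫ s in Set.Ioc (0:ℝ) 1, ‖aa s m * t ^ m‖ := by
    apply Summable.of_nonneg_of_le
      (fun m => MeasureTheory.setIntegral_nonneg measurableSet_Ioc (fun s _ => norm_nonneg _))
      (fun m => ?_) (summable_geometric_of_lt_one ht0.le ht1)
    calc ∫ s in Set.Ioc (0:ℝ) 1, ‖aa s m * t ^ m‖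
        ≤ ∫ _s in Set.Ioc (0:ℝ) 1, t ^ m := by
          apply setIntegral_mono_on ((hint m).norm)
            (integrableOn_const (by simp)) measurableSet_Ioc
          intro s hs
          rw [Real.norm_eq_abs, abs_mul, abs_of_nonneg (aa_nonneg hs.1.le m),
            abs_of_nonneg (by positivity : (0:ℝ) ≤ t ^ m)]
          have h1 := aa_le_one hs.1.le hs.2 m
          have h2 : (0:ℝ) ≤ t ^ m := by positivity
          nlinarith
      _ = t ^ m := by rw [MeasureTheory.setIntegral_const, MeasureTheory.measureReal_def, volume_Ioc01, one_smul]
  calc ∑' m, S m * t ^ m = ∑' m, ∫ s in Set.Ioc (0:ℝ) 1, aa s m * t ^ m := by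
        exact tsum_congr hSm
    _ = ∫ s in Set.Ioc (0:ℝ) 1, ∑' m, aa s m * t ^ m :=
        MeasureTheory.integral_tsum_of_summable_integral_norm hint hnorm
    _ = ∫ s in Set.Ioc (0:ℝ) 1, Real.exp (L * s) := by
        apply MeasureTheory.setIntegral_congr_fun measurableSet_Ioc
        intro s hs
        have := (hasSum_aa hs.1.le hs.2 ht0.le ht1).tsum_eq
        simp only [this, hL]
        ring_nf
    _ = ∫ s in (0:ℝ)..1, Real.exp (L * s) :=
        (intervalIntegral.integral_of_le (by norm_num)).symm
    _ = L⁻¹ * ((1 - t)⁻¹ - 1) := by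
        rw [intervalIntegral.integral_comp_mul_left Real.exp (ne_of_gt hL0)]
        rw [mul_zero, mul_one, integral_exp]
        rw [hL, Real.exp_neg, Real.exp_log h1t, Real.exp_zero]
        simp [smul_eq_mul]

lemma hasSum_S_shift {t : ℝ} (ht : t ∈ Set.Ioo (0:ℝ) 1) :
    HasSum (fun m => S (m + 1) * t ^ m)
      (((-Real.log (1 - t))⁻¹ * ((1 - t)⁻¹ - 1) - 1) * t⁻¹) := by
  have ht0 := ht.1
  have htne : t ≠ 0 := ne_of_gt ht0
  have h := hasSum_S ht
  have h2 := (hasSum_nat_add_iff' (f := fun m => S m * t ^ m) 1).2 h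
  have hfin : ∑ i ∈ Finset.range 1, S i * t ^ i = 1 := by simp [S_zero]
  rw [hfin] at h2
  have h3 := h2.mul_right t⁻¹
  have h4 : (fun n : ℕ => S (n + 1) * t ^ (n + 1) * t⁻¹) = fun n : ℕ => S (n + 1) * t ^ n := by
    funext n
    rw [pow_succ]
    field_simp
  rwa [h4] at h3

noncomputable def cc (n : ℕ) : ℝ := S n / n

lemma cc_mul (n : ℕ) : ((n : ℝ) + 1) * cc (n + 1) = S (n + 1) := by
  unfold cc
  push_cast
  field_simp

lemma cc_nonneg (n : ℕ) : 0 ≤ cc n := div_nonneg (S_nonneg n) (by positivity)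

lemma cc_le (n : ℕ) : cc (n + 1) ≤ 1 / ((n : ℝ) + 2) := by
  unfold cc
  rw [div_le_div_iff₀ (by positivity) (by positivity)]
  push_cast
  have h := S_le_half (m := n + 1) (by omega)
  nlinarith [S_nonneg (n + 1)]

lemma cc_ge (n : ℕ) : 1 / (((n : ℝ) + 1) ^ 2 * ((n : ℝ) + 2)) ≤ cc (n + 1) := by
  unfold cc
  rw [div_le_div_iff₀ (by positivity) (by positivity)]
  push_cast
  have h := S_ge (m := n + 1) (by omega)
  rw [div_le_iff₀ (by positivity)] at h
  push_cast at h
  nlinarith [S_nonneg (n + 1), mul_le_mul_of_nonneg_right h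
    (show (0:ℝ) ≤ ((n:ℝ)+1)*((n:ℝ)+2) by positivity), Nat.cast_nonneg (α := ℝ) n]

lemma summable_cc {z : ℝ} (hz : |z| < 1) :
    Summable (fun n : ℕ => cc (n + 1) * z ^ (n + 1)) := by
  apply Summable.of_norm_bounded (g := fun n => |z| ^ (n + 1))
  · have : Summable (fun n : ℕ => |z| * |z| ^ n) :=
      (summable_geometric_of_lt_one (abs_nonneg z) hz).mul_left _
    apply this.congr
    intro n
    rw [← pow_succ']
  · intro n
    rw [Real.norm_eq_abs, abs_mul, abs_pow, abs_of_nonneg (cc_nonneg (n+1))]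
    apply mul_le_of_le_one_left (by positivity)
    calc cc (n+1) ≤ 1 / ((n:ℝ) + 2) := cc_le n
      _ ≤ 1 := by rw [div_le_one (by positivity)]; linarith [Nat.cast_nonneg (α := ℝ) n]

lemma hasDerivAt_cc_term (n : ℕ) (z : ℝ) :
    HasDerivAt (fun w => cc (n + 1) * w ^ (n + 1)) (cc (n + 1) * (((n : ℝ) + 1) * z ^ n)) z := by
  have := (hasDerivAt_pow (n + 1) z).const_mul (cc (n + 1))
  exact this.congr_deriv (by simp)

lemma cc_term_bound {b z : ℝ} (hz : |z| ≤ b) (n : ℕ) :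
    ‖cc (n + 1) * (((n : ℝ) + 1) * z ^ n)‖ ≤ b ^ n := by
  have hb0 : 0 ≤ b := le_trans (abs_nonneg z) hz
  rw [Real.norm_eq_abs, abs_mul, abs_mul, abs_of_nonneg (cc_nonneg (n+1)),
    abs_of_nonneg (by positivity : (0:ℝ) ≤ (n:ℝ)+1), abs_pow]
  calc cc (n+1) * (((n:ℝ)+1) * |z| ^ n) = (((n:ℝ)+1) * cc (n+1)) * |z| ^ n := by ring
    _ = S (n+1) * |z| ^ n := by rw [cc_mul]
    _ ≤ 1 * b ^ n := mul_le_mul (S_le_one (n+1)) (pow_le_pow_left₀ (abs_nonneg z) hz n)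
        (by positivity) (by norm_num)
    _ = b ^ n := by ring

lemma summable_cc_zero : Summable (fun n : ℕ => cc (n + 1) * (0:ℝ) ^ (n + 1)) :=
  summable_of_ne_finset_zero (s := (∅ : Finset ℕ)) (fun n _ => by simp)

lemma hasDerivAt_W {b y : ℝ} (hb0 : 0 < b) (hb1 : b < 1) (hy : y ∈ Set.Ioo (-b) b) :
    HasDerivAt (fun z => ∑' n, cc (n + 1) * z ^ (n + 1))
      (∑' n, cc (n + 1) * (((n : ℝ) + 1) * y ^ n)) y :=
  hasDerivAt_tsum_of_isPreconnected (u := fun n : ℕ => b ^ n)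
    (summable_geometric_of_lt_one hb0.le hb1) isOpen_Ioo (convex_Ioo _ _).isPreconnected
    (fun n z _ => hasDerivAt_cc_term n z)
    (fun n z hz => cc_term_bound (by rw [abs_le]; exact ⟨hz.1.le, hz.2.le⟩) n)
    (by constructor <;> [linarith; exact hb0]) summable_cc_zero hy

lemma hasDerivAt_R {y : ℝ} (hy : y ∈ Set.Ioo (0:ℝ) 1) :
    HasDerivAt (fun z => Real.log (-Real.log (1 - z) / z))
      (((-Real.log (1 - y))⁻¹ * ((1 - y)⁻¹ - 1) - 1) * y⁻¹) y := by
  obtain ⟨hy0, hy1⟩ := hy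
  have h1y : (0:ℝ) < 1 - y := by linarith
  have hL0 : 0 < -Real.log (1 - y) := neg_pos.2 (Real.log_neg h1y (by linarith))
  have hmain : HasDerivAt (fun z => Real.log (-Real.log (1 - z)) - Real.log z)
      ((-Real.log (1 - y))⁻¹ * (1 - y)⁻¹ - y⁻¹) y := by
    have h1 : HasDerivAt (fun z => -Real.log (1 - z)) ((1 - y)⁻¹) y := by
      have hlog : HasDerivAt (fun z => Real.log (1 - z)) ((1 - y)⁻¹ * (-1)) y :=
        (Real.hasDerivAt_log (ne_of_gt h1y)).comp y ((hasDerivAt_id y).const_sub 1)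
      have := hlog.fun_neg
      exact this.congr_deriv (by ring)
    have h2 : HasDerivAt (fun z => Real.log (-Real.log (1 - z)))
        ((-Real.log (1 - y))⁻¹ * (1 - y)⁻¹) y :=
      (h1.log hL0.ne').congr_deriv (by ring)
    exact h2.sub (Real.hasDerivAt_log (ne_of_gt hy0))
  have hcongr : (fun z => Real.log (-Real.log (1 - z) / z)) =ᶠ[nhds y]
      (fun z => Real.log (-Real.log (1 - z)) - Real.log z) := by
    have hmem : Set.Ioo (0:ℝ) 1 ∈ nhds y := isOpen_Ioo.mem_nhds ⟨hy0, hy1⟩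
    filter_upwards [hmem] with z hz
    have h1z : (0:ℝ) < 1 - z := by linarith [hz.2]
    have hLz : 0 < -Real.log (1 - z) := neg_pos.2 (Real.log_neg h1z (by linarith [hz.1]))
    rw [Real.log_div (ne_of_gt hLz) (ne_of_gt hz.1)]
  have hval : ((-Real.log (1 - y))⁻¹ * ((1 - y)⁻¹ - 1) - 1) * y⁻¹
      = (-Real.log (1 - y))⁻¹ * (1 - y)⁻¹ - y⁻¹ := by
    have hLne := ne_of_gt hL0
    have hyne := ne_of_gt hy0
    have h1yne := ne_of_gt h1y
    field_simp
    all_goals ring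
  rw [hval]
  exact HasDerivAt.congr_of_eventuallyEq hmain hcongr

lemma hasSum_cc {t : ℝ} (ht : t ∈ Set.Ioo (0:ℝ) 1) :
    HasSum (fun n : ℕ => cc (n + 1) * t ^ (n + 1))
      (Real.log (-Real.log (1 - t) / t)) := by
  obtain ⟨ht0, ht1⟩ := ht
  set W : ℝ → ℝ := fun z => ∑' n, cc (n + 1) * z ^ (n + 1) with hW
  set R : ℝ → ℝ := fun z => Real.log (-Real.log (1 - z) / z) with hR
  have hsummable : Summable (fun n : ℕ => cc (n + 1) * t ^ (n + 1)) :=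
    summable_cc (by rw [abs_of_pos ht0]; exact ht1)
  suffices hWt : W t = R t by
    have := hsummable.hasSum
    rwa [show ∑' n, cc (n+1) * t ^ (n+1) = W t from rfl, hWt] at this
  -- derivative of W - R is zero on Ioo 0 1
  have hder : ∀ y ∈ Set.Ioo (0:ℝ) 1, HasDerivAt (fun z => W z - R z) 0 y := by
    intro y hy
    set b : ℝ := (1 + y) / 2 with hb
    have hb0 : 0 < b := by rw [hb]; nlinarith [hy.1]
    have hb1 : b < 1 := by rw [hb]; nlinarith [hy.2]
    have hyb : y ∈ Set.Ioo (-b) b := by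
      constructor <;> rw [hb] <;> nlinarith [hy.1, hy.2]
    have hWd := hasDerivAt_W hb0 hb1 hyb
    have htsum : (∑' n, cc (n + 1) * (((n : ℝ) + 1) * y ^ n))
        = ((-Real.log (1 - y))⁻¹ * ((1 - y)⁻¹ - 1) - 1) * y⁻¹ := by
      rw [show (fun n : ℕ => cc (n + 1) * (((n : ℝ) + 1) * y ^ n))
          = fun n : ℕ => S (n + 1) * y ^ n from funext fun n => by
            rw [← cc_mul]; ring]
      exact (hasSum_S_shift hy).tsum_eq
    rw [htsum] at hWd
    have := hWd.fun_sub (hasDerivAt_R hy)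
    simpa using this
  -- constancy
  have hconst : ∀ x ∈ Set.Ioc (0:ℝ) t, W t - R t = W x - R x := by
    intro x hx
    have hsub : Set.Icc x t ⊆ Set.Ioo (0:ℝ) 1 := fun z hz =>
      ⟨lt_of_lt_of_le hx.1 hz.1, lt_of_le_of_lt hz.2 ht1⟩
    have := constant_of_has_deriv_right_zero
      (f := fun z => W z - R z) (a := x) (b := t)
      (fun z hz => ((hder z (hsub hz)).continuousAt.continuousWithinAt))
      (fun z hz => (hder z (hsub ⟨hz.1, hz.2.le⟩)).hasDerivWithinAt)
      t (Set.mem_Icc.2 ⟨hx.2, le_rfl⟩)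
    exact this
  -- limits
  have hWlim : Filter.Tendsto W (nhdsWithin 0 (Set.Ioi 0)) (nhds 0) := by
    refine squeeze_zero_norm' (a := fun x : ℝ => x) ?_
      (Filter.Tendsto.mono_left (continuous_id.tendsto 0) nhdsWithin_le_nhds)
    filter_upwards [Ioo_mem_nhdsGT_of_mem
      (by constructor <;> norm_num : (0:ℝ) ∈ Set.Ico (0:ℝ) (1/2))] with x hx
    obtain ⟨hx0, hx2⟩ := hx
    have hx1 : x < 1 := by linarith
    have h1x : (0:ℝ) < 1 - x := by linarith
    have hxabs : |x| < 1 := by rw [abs_of_pos hx0]; exact hx1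
    have hgeo : HasSum (fun n : ℕ => x * x ^ n) (x * (1 - x)⁻¹) :=
      (hasSum_geometric_of_lt_one hx0.le hx1).mul_left x
    rw [show (fun n : ℕ => x * x ^ n) = fun n : ℕ => x ^ (n + 1) from
      funext fun n => (pow_succ' x n).symm] at hgeo
    have hsn : Summable (fun n : ℕ => ‖cc (n + 1) * x ^ (n + 1)‖) :=
      (summable_cc hxabs).abs.congr (fun n => (Real.norm_eq_abs _).symm)
    have hbound : ∀ n : ℕ, ‖cc (n + 1) * x ^ (n + 1)‖ ≤ 1 / 2 * x ^ (n + 1) := by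
      intro n
      rw [Real.norm_eq_abs, abs_mul, abs_pow, abs_of_nonneg (cc_nonneg (n+1)),
        abs_of_pos hx0]
      apply mul_le_mul _ le_rfl (by positivity) (by norm_num)
      calc cc (n+1) ≤ 1 / ((n:ℝ) + 2) := cc_le n
        _ ≤ 1 / 2 := by
            apply div_le_div_of_nonneg_left (by norm_num) (by norm_num)
            linarith [Nat.cast_nonneg (α := ℝ) n]
    calc ‖W x‖ ≤ ∑' n, ‖cc (n + 1) * x ^ (n + 1)‖ := norm_tsum_le_tsum_norm hsn
      _ ≤ ∑' n : ℕ, 1 / 2 * x ^ (n + 1) :=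
          Summable.tsum_le_tsum hbound hsn (hgeo.mul_left (1/2)).summable
      _ = 1 / 2 * (x * (1 - x)⁻¹) := (hgeo.mul_left (1/2)).tsum_eq
      _ ≤ x := by
          have key : x * (1 - x)⁻¹ ≤ 2 * x := by
            rw [← div_eq_mul_inv, div_le_iff₀ h1x]
            nlinarith
          linarith
  have hRlim : Filter.Tendsto R (nhdsWithin 0 (Set.Ioi 0)) (nhds 0) := by
    have h1 : HasDerivAt (fun z : ℝ => Real.log (1 - z)) ((1 - (0:ℝ))⁻¹ * (-1)) 0 :=
      (Real.hasDerivAt_log (by norm_num)).comp 0 ((hasDerivAt_id (0:ℝ)).const_sub 1)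
    have h2 : HasDerivAt (fun z : ℝ => -Real.log (1 - z)) 1 0 := by
      have := h1.fun_neg
      exact this.congr_deriv (by norm_num)
    have hslope := hasDerivAt_iff_tendsto_slope.1 h2
    have hmono : nhdsWithin (0:ℝ) (Set.Ioi 0) ≤ nhdsWithin 0 {(0:ℝ)}ᶜ :=
      nhdsWithin_mono 0 (fun x hx => ne_of_gt hx)
    have hslope' : Filter.Tendsto (fun x : ℝ => -Real.log (1 - x) / x)
        (nhdsWithin 0 (Set.Ioi 0)) (nhds 1) := by
      apply Filter.Tendsto.congr' _ (hslope.mono_left hmono)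
      filter_upwards [self_mem_nhdsWithin] with x hx
      have hxne : x ≠ 0 := ne_of_gt hx
      simp only [slope_def_field]
      rw [show (fun z : ℝ => -Real.log (1 - z)) x - (fun z : ℝ => -Real.log (1 - z)) 0
        = -Real.log (1 - x) by norm_num, sub_zero]
    have hlog : Filter.Tendsto Real.log (nhds 1) (nhds 0) := by
      have := (Real.continuousAt_log (by norm_num : (1:ℝ) ≠ 0)).tendsto
      simpa using this
    exact hlog.comp hslope'
  have hg0 : Filter.Tendsto (fun x => W x - R x) (nhdsWithin 0 (Set.Ioi 0)) (nhds 0) := by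
    simpa using hWlim.sub hRlim
  have hgt : Filter.Tendsto (fun x => W x - R x) (nhdsWithin 0 (Set.Ioi 0))
      (nhds (W t - R t)) := by
    apply Filter.Tendsto.congr' _ tendsto_const_nhds
    filter_upwards [Ioc_mem_nhdsGT_of_mem (Set.mem_Ico.2 ⟨le_rfl, ht0⟩)] with x hx
    exact hconst x hx
  have := tendsto_nhds_unique hgt hg0
  linarith

lemma coeff_eq_zero {d : ℕ → ℝ} {ε : ℝ} (hε : 0 < ε)
    (h : ∀ u : ℝ, 0 < u → u < ε → HasSum (fun k : ℕ => d k * u ^ (k + 1)) 0) :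
    ∀ k, d k = 0 := by
  set u₀ := ε / 2 with hu₀
  have hu₀0 : 0 < u₀ := by positivity
  have hu₀ε : u₀ < ε := by rw [hu₀]; linarith
  have htend : Filter.Tendsto (fun k => |d k * u₀ ^ (k + 1)|) Filter.atTop (nhds 0) := by
    have := (h u₀ hu₀0 hu₀ε).summable.tendsto_atTop_zero
    simpa using this.abs
  obtain ⟨C, hC⟩ := htend.bddAbove_range
  have hC' : ∀ k, |d k| * u₀ ^ (k + 1) ≤ C := fun k => by
    have := hC (Set.mem_range_self k)
    rwa [abs_mul, abs_pow, abs_of_pos hu₀0] at this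
  have hC0 : 0 ≤ C := le_trans (abs_nonneg _) (hC (Set.mem_range_self 0))
  intro k
  induction k using Nat.strong_induction_on with
  | _ n ih =>
  have hest : ∀ u : ℝ, 0 < u → u < u₀ / 2 → |d n| ≤ 2 * C / u₀ ^ (n + 2) * u := by
    intro u hu0 hu2
    have huε : u < ε := by linarith
    have huu₀ : u < u₀ := by linarith
    set q : ℝ := u / u₀ with hq
    have hq0 : 0 < q := by positivity
    have hq2 : q < 1/2 := by rw [hq, div_lt_iff₀ hu₀0]; linarith
    have hq1 : q < 1 := by linarith
    have hsum := h u hu0 huε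
    have hz : ∑ i ∈ Finset.range n, d i * u ^ (i + 1) = 0 :=
      Finset.sum_eq_zero fun i hi => by rw [ih i (Finset.mem_range.1 hi)]; ring
    have h2 : HasSum (fun k : ℕ => d (k + n) * u ^ (k + n + 1)) 0 := by
      have := (hasSum_nat_add_iff' (f := fun k : ℕ => d k * u ^ (k + 1)) n).2 hsum
      rwa [hz, sub_zero] at this
    have h3 : HasSum (fun k : ℕ => d (k + 1 + n) * u ^ (k + 1 + n + 1))
        (0 - d (0 + n) * u ^ (0 + n + 1)) := by
      have := (hasSum_nat_add_iff' (f := fun k : ℕ => d (k + n) * u ^ (k + n + 1)) 1).2 h2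
      simpa using this
    have hBsum : HasSum (fun k : ℕ => C * q ^ (n + 2) * q ^ k)
        (C * q ^ (n + 2) * (1 - q)⁻¹) :=
      (hasSum_geometric_of_lt_one hq0.le hq1).mul_left _
    have hterm : ∀ k : ℕ, ‖d (k + 1 + n) * u ^ (k + 1 + n + 1)‖ ≤ C * q ^ (n + 2) * q ^ k := by
      intro k
      have hm := hC' (k + 1 + n)
      have hpow : (0:ℝ) < u₀ ^ (k + 1 + n + 1) := by positivity
      have hd : |d (k + 1 + n)| ≤ C / u₀ ^ (k + 1 + n + 1) := by
        rw [le_div_iff₀ hpow]; exact hm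
      rw [Real.norm_eq_abs, abs_mul, abs_pow, abs_of_pos hu0]
      calc |d (k + 1 + n)| * u ^ (k + 1 + n + 1)
          ≤ C / u₀ ^ (k + 1 + n + 1) * u ^ (k + 1 + n + 1) :=
            mul_le_mul_of_nonneg_right hd (by positivity)
        _ = C * q ^ (k + 1 + n + 1) := by
            rw [hq, div_pow u u₀, div_mul_eq_mul_div, mul_div_assoc]
        _ = C * q ^ (n + 2) * q ^ k := by
            rw [show k + 1 + n + 1 = (n + 2) + k by omega, pow_add]
            ring
    have hnormsum : Summable (fun k : ℕ => ‖d (k + 1 + n) * u ^ (k + 1 + n + 1)‖) :=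
      h3.summable.abs.congr (fun k => (Real.norm_eq_abs _).symm)
    have hmain : |d n| * u ^ (n + 1) ≤ C * q ^ (n + 2) * (1 - q)⁻¹ := by
      have e1 : |d n| * u ^ (n + 1) = ‖0 - d (0 + n) * u ^ (0 + n + 1)‖ := by
        simp [abs_mul, abs_of_pos hu0, abs_pow]
      rw [e1, ← h3.tsum_eq]
      calc ‖∑' k, d (k + 1 + n) * u ^ (k + 1 + n + 1)‖
          ≤ ∑' k, ‖d (k + 1 + n) * u ^ (k + 1 + n + 1)‖ := norm_tsum_le_tsum_norm hnormsum
        _ ≤ ∑' k : ℕ, C * q ^ (n + 2) * q ^ k := Summable.tsum_le_tsum hterm hnormsum hBsum.summable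
        _ = C * q ^ (n + 2) * (1 - q)⁻¹ := hBsum.tsum_eq
    have hinv : (1 - q)⁻¹ ≤ 2 := by
      rw [inv_le_comm₀ (by linarith) (by norm_num)]
      linarith
    have h4 : |d n| * u ^ (n + 1) ≤ 2 * C * q ^ (n + 2) := by
      have : C * q ^ (n + 2) * (1 - q)⁻¹ ≤ C * q ^ (n + 2) * 2 :=
        mul_le_mul_of_nonneg_left hinv (by positivity)
      nlinarith
    have hqpow : q ^ (n + 2) = u ^ (n + 1) * u / u₀ ^ (n + 2) := by
      rw [hq, div_pow, pow_succ]
    have hupow : (0:ℝ) < u ^ (n + 1) := by positivity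
    apply le_of_mul_le_mul_right _ hupow
    calc |d n| * u ^ (n + 1) ≤ 2 * C * q ^ (n + 2) := h4
      _ = 2 * C / u₀ ^ (n + 2) * u * u ^ (n + 1) := by
          rw [hqpow]; ring
  by_contra hdn
  have hd0 : 0 < |d n| := abs_pos.2 hdn
  set K := 2 * C / u₀ ^ (n + 2) with hK
  have hK0 : 0 ≤ K := by positivity
  set u := min (u₀ / 4) (|d n| / (2 * (K + 1))) with hu
  have hu0 : 0 < u := lt_min (by positivity) (by positivity)
  have hu2 : u < u₀ / 2 := lt_of_le_of_lt (min_le_left _ _) (by linarith)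
  have h5 := hest u hu0 hu2
  have h6 : K * u ≤ (K + 1) * u := by nlinarith
  have h7 : (K + 1) * u ≤ (K + 1) * (|d n| / (2 * (K + 1))) :=
    mul_le_mul_of_nonneg_left (min_le_right _ _) (by linarith)
  have h8 : (K + 1) * (|d n| / (2 * (K + 1))) = |d n| / 2 := by
    field_simp
  rw [h8] at h7
  linarith

end Stmt14Aux

open Stmt14Aux

theorem stmt_14 (ρ : ℝ) (hρ : ρ ∈ Set.Ioc (0 : ℝ) 1) (r : ℝ) (hr : 0 < r)
    (a : ℕ → ℝ)
    (ha : ∃ ε : ℝ, 0 < ε ∧ ∀ u : ℝ, 0 < u → u < ε →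
      HasSum (fun k : ℕ => a (k + 1) * u ^ (k + 1))
        (r * Real.log (-Real.log (1 - ρ * u) / (ρ * u)))) :
    ∀ k : ℕ,
      r * ρ ^ (k + 1) / (((k : ℝ) + 1) ^ 2 * ((k : ℝ) + 2)) ≤ a (k + 1) ∧
        a (k + 1) ≤ r * ρ ^ (k + 1) / ((k : ℝ) + 2) := by
  obtain ⟨ε, hε, hsum⟩ := ha
  obtain ⟨hρ0, hρ1⟩ := hρ
  set ε' := min ε (1 / ρ) with hε'
  have hε'0 : 0 < ε' := lt_min hε (by positivity)
  have key : ∀ u : ℝ, 0 < u → u < ε' →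
      HasSum (fun k : ℕ => (a (k + 1) - r * (cc (k + 1) * ρ ^ (k + 1))) * u ^ (k + 1)) 0 := by
    intro u hu0 hu1
    have hx : ρ * u ∈ Set.Ioo (0:ℝ) 1 := by
      constructor
      · positivity
      · have h1 : u < 1 / ρ := lt_of_lt_of_le hu1 (min_le_right _ _)
        calc ρ * u < ρ * (1 / ρ) := mul_lt_mul_of_pos_left h1 hρ0
          _ = 1 := by field_simp
    have h1 := (hasSum_cc hx).mul_left r
    have h2 : HasSum (fun n : ℕ => r * (cc (n + 1) * ρ ^ (n + 1)) * u ^ (n + 1))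
        (r * Real.log (-Real.log (1 - ρ * u) / (ρ * u))) := by
      have hfun : (fun n : ℕ => r * (cc (n + 1) * (ρ * u) ^ (n + 1))) =
          fun n : ℕ => r * (cc (n + 1) * ρ ^ (n + 1)) * u ^ (n + 1) :=
        funext fun n => by rw [mul_pow]; ring
      rwa [hfun] at h1
    have h4 : (fun k : ℕ => (a (k + 1) - r * (cc (k + 1) * ρ ^ (k + 1))) * u ^ (k + 1)) =
        fun k : ℕ => a (k + 1) * u ^ (k + 1) - r * (cc (k + 1) * ρ ^ (k + 1)) * u ^ (k + 1) :=
      funext fun k => by ring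
    rw [h4]
    have := (hsum u hu0 (lt_of_lt_of_le hu1 (min_le_left _ _))).sub h2
    simpa using this
  have hzero := coeff_eq_zero hε'0 key
  intro k
  have hak : a (k + 1) = r * (cc (k + 1) * ρ ^ (k + 1)) := by
    have := hzero k
    linarith
  rw [hak]
  have hpow : (0:ℝ) < ρ ^ (k + 1) := by positivity
  constructor
  · calc r * ρ ^ (k + 1) / (((k : ℝ) + 1) ^ 2 * ((k : ℝ) + 2))
        = 1 / (((k : ℝ) + 1) ^ 2 * ((k : ℝ) + 2)) * (r * ρ ^ (k + 1)) := by ring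
      _ ≤ cc (k + 1) * (r * ρ ^ (k + 1)) :=
          mul_le_mul_of_nonneg_right (cc_ge k) (by positivity)
      _ = r * (cc (k + 1) * ρ ^ (k + 1)) := by ring
  · calc r * (cc (k + 1) * ρ ^ (k + 1)) = cc (k + 1) * (r * ρ ^ (k + 1)) := by ring
      _ ≤ 1 / ((k : ℝ) + 2) * (r * ρ ^ (k + 1)) :=
          mul_le_mul_of_nonneg_right (cc_le k) (by positivity)
      _ = r * ρ ^ (k + 1) / ((k : ℝ) + 2) := by ring
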